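/- arXiv:1612.02041 — 7 statements merged into one kernel-verified Lean document; each statement's English description precedes it below -/
import Mathlib

section
/- Along any differentiable solution c : I → ℂ³ of the equations of motion of the trimer Hamiltonian, the quantity N(t) = |c1(t)|² + |c2(t)|² + |c3(t)|² is constant in t. -/
open Complex ComplexConjugate

/-- The Wirtinger derivative `∂H/∂(conj c₁)` of the trimer Hamiltonian. -/
noncomputable def trimerRHS1 (Ω1 A : ℝ) (c1 c2 c3 : ℂ) : ℂ :=
  (Ω1 : ℂ) * c1 - (A : ℂ) *
    (3 * (c1 * conj c1 + c3 * conj c3) * c1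
      + 3 * (c1 * conj c3 + c3 * conj c1) * c3
      + c1 * (c1 * conj c3 + c3 * conj c1)
      + (c1 * conj c1 + c3 * conj c3) * c3
      - 4 * c2 * conj c2 * (c3 - c1)
      - 2 * (conj c3 - conj c1) * c2 ^ 2)

/-- The Wirtinger derivative `∂H/∂(conj c₂)` of the trimer Hamiltonian. -/
noncomputable def trimerRHS2 (Ω2 A : ℝ) (c1 c2 c3 : ℂ) : ℂ :=
  (Ω2 : ℂ) * c2 - (A : ℂ) *
    (4 * c2 ^ 2 * conj c2
      + 4 * c2 * (c3 - c1) * (conj c3 - conj c1)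
      + 2 * (c3 - c1) ^ 2 * conj c2)

/-- The Wirtinger derivative `∂H/∂(conj c₃)` of the trimer Hamiltonian. -/
noncomputable def trimerRHS3 (Ω3 A : ℝ) (c1 c2 c3 : ℂ) : ℂ :=
  (Ω3 : ℂ) * c3 - (A : ℂ) *
    (3 * (c1 * conj c1 + c3 * conj c3) * c3
      + 3 * (c1 * conj c3 + c3 * conj c1) * c1
      + c3 * (c1 * conj c3 + c3 * conj c1)
      + (c1 * conj c1 + c3 * conj c3) * c1
      + 4 * c2 * conj c2 * (c3 - c1)
      + 2 * (conj c3 - conj c1) * c2 ^ 2)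

private lemma hasDerivAt_normSq_comp {c : ℝ → ℂ} {d : ℂ} {t : ℝ}
    (h : HasDerivAt c d t) :
    HasDerivAt (fun t => Complex.normSq (c t))
      (2 * ((starRingEnd ℂ) (c t) * d).re) t := by
  have hre : HasDerivAt (fun t => (c t).re) d.re t :=
    (Complex.reCLM.hasFDerivAt.comp_hasDerivAt t h)
  have him : HasDerivAt (fun t => (c t).im) d.im t :=
    (Complex.imCLM.hasFDerivAt.comp_hasDerivAt t h)
  have := (hre.mul hre).add (him.mul him)
  refine HasDerivAt.congr_deriv (f := fun t => Complex.normSq (c t)) this ?_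
  simp [Complex.mul_re, Complex.conj_re, Complex.conj_im]; ring


/-- Along any differentiable solution of the trimer equations of motion
`i ċ_j = ∂H/∂(conj c_j)` on an interval `I`, the power
`N(t) = |c₁(t)|² + |c₂(t)|² + |c₃(t)|²` is constant. -/
theorem trimer_power_conserved (Ω1 Ω2 Ω3 A : ℝ) (I : Set ℝ) (hI : Convex ℝ I)
    (c1 c2 c3 : ℝ → ℂ)
    (h1 : ∀ t ∈ I, HasDerivAt c1 (-Complex.I * trimerRHS1 Ω1 A (c1 t) (c2 t) (c3 t)) t)
    (h2 : ∀ t ∈ I, HasDerivAt c2 (-Complex.I * trimerRHS2 Ω2 A (c1 t) (c2 t) (c3 t)) t)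
    (h3 : ∀ t ∈ I, HasDerivAt c3 (-Complex.I * trimerRHS3 Ω3 A (c1 t) (c2 t) (c3 t)) t) :
    ∀ s ∈ I, ∀ t ∈ I,
      ‖c1 s‖ ^ 2 + ‖c2 s‖ ^ 2 + ‖c3 s‖ ^ 2
        = ‖c1 t‖ ^ 2 + ‖c2 t‖ ^ 2 + ‖c3 t‖ ^ 2 := by
  set N : ℝ → ℝ := fun t =>
    Complex.normSq (c1 t) + Complex.normSq (c2 t) + Complex.normSq (c3 t) with hN
  have key : ∀ z1 z2 z3 : ℂ,
      ((starRingEnd ℂ) z1 * trimerRHS1 Ω1 A z1 z2 z3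
        + (starRingEnd ℂ) z2 * trimerRHS2 Ω2 A z1 z2 z3
        + (starRingEnd ℂ) z3 * trimerRHS3 Ω3 A z1 z2 z3).im = 0 := by
    intro z1 z2 z3
    rw [← Complex.conj_eq_iff_im]
    simp only [trimerRHS1, trimerRHS2, trimerRHS3, map_add, map_mul, map_sub, map_pow,
      Complex.conj_conj, Complex.conj_ofReal, map_ofNat]
    ring
  have hderiv : ∀ t ∈ I, HasDerivAt N 0 t := by
    intro t ht
    have H := ((hasDerivAt_normSq_comp (h1 t ht)).add
      (hasDerivAt_normSq_comp (h2 t ht))).add (hasDerivAt_normSq_comp (h3 t ht))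
    refine HasDerivAt.congr_deriv (f := N) H ?_
    have hkey := key (c1 t) (c2 t) (c3 t)
    have : ∀ w f : ℂ, (w * (-Complex.I * f)).re = (w * f).im := by
      intro w f; simp [Complex.mul_re, Complex.mul_im]; ring
    rw [this, this, this]
    simp only [Complex.add_im] at hkey
    linarith
  intro s hs t ht
  have hle := hI.norm_image_sub_le_of_norm_hasDerivWithin_le
    (fun x hx => (hderiv x hx).hasDerivWithinAt)
    (C := 0) (fun x hx => by simp) ht hs
  have hNeq : N s = N t := by
    have := hle
    simp only [zero_mul] at this
    have h0 : ‖N s - N t‖ ≤ 0 := this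
    have := norm_le_zero_iff.mp h0
    linarith [sub_eq_zero.mp this]
  simpa [hN, Complex.sq_norm] using hNeq
end

section
/- The even subspace {c2 = 0} is invariant under the trimer flow: if c : I → ℂ³ is a solution of the equations of motion of the trimer Hamiltonian on an interval I containing 0 and c2(0) = 0, then c2(t) = 0 for all t ∈ I. -/
open Complex ComplexConjugate

private lemma gronwall_zero' {f f' : ℝ → ℂ} {g : ℝ → ℝ} {b : ℝ} (hb : 0 ≤ b)
    (hd : ∀ s ∈ Set.Icc 0 b, HasDerivAt f (f' s) s)
    (hbd : ∀ s ∈ Set.Icc 0 b, ‖f' s‖ ≤ g s * ‖f s‖)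
    (hg : ContinuousOn g (Set.Icc 0 b))
    (h0 : f 0 = 0) : f b = 0 := by
  obtain ⟨x0, _, hmax⟩ := IsCompact.exists_isMaxOn isCompact_Icc (Set.nonempty_Icc.2 hb) hg
  set K := g x0 with hK
  have key := norm_le_gronwallBound_of_norm_deriv_right_le (f := f) (f' := f')
    (δ := 0) (K := K) (ε := 0) (a := 0) (b := b)
    (fun s hs => (hd s hs).continuousAt.continuousWithinAt)
    (fun s hs => (hd s (Set.mem_Icc_of_Ico hs)).hasDerivWithinAt)
    (by simp [h0])
    (fun s hs => by
      have hs' := Set.mem_Icc_of_Ico hs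
      have h1 := hbd s hs'
      have h2 : g s ≤ g x0 := hmax hs'
      nlinarith [norm_nonneg (f s)])
  have hb2 := key b (Set.right_mem_Icc.2 hb)
  rw [gronwallBound_ε0] at hb2
  simp only [zero_mul] at hb2
  exact norm_le_zero_iff.1 hb2

private lemma trimer_bound' (Ω2 A : ℝ) (x y z : ℂ) :
    ‖-Complex.I * trimerRHS2 Ω2 A x y z‖ ≤
      (|Ω2| + |A| * (4 * Complex.normSq y + 4 * Complex.normSq (z - x))
        + 2 * |A| * ‖z - x‖ ^ 2) * ‖y‖ := by
  set r : ℝ := Ω2 - A * (4 * Complex.normSq y + 4 * Complex.normSq (z - x)) with hr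
  have hre : trimerRHS2 Ω2 A x y z =
      (r : ℂ) * y + (-2 * (A : ℂ) * (z - x) ^ 2) * conj y := by
    have e : ∀ w : ℂ, (Complex.normSq w : ℂ) = w * conj w := fun w => (Complex.mul_conj w).symm
    simp only [trimerRHS2, hr]
    push_cast
    rw [e, e]
    simp only [map_sub]
    ring
  rw [hre]
  have h1 : ‖-Complex.I * ((r : ℂ) * y + (-2 * (A : ℂ) * (z - x) ^ 2) * conj y)‖
      = ‖(r : ℂ) * y + (-2 * (A : ℂ) * (z - x) ^ 2) * conj y‖ := by
    rw [norm_mul]; simp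
  rw [h1]
  have h2 : ‖(r : ℂ) * y + (-2 * (A : ℂ) * (z - x) ^ 2) * conj y‖
      ≤ |r| * ‖y‖ + 2 * |A| * ‖z - x‖ ^ 2 * ‖y‖ := by
    refine (norm_add_le _ _).trans ?_
    rw [norm_mul, norm_mul, Complex.norm_real, Real.norm_eq_abs, RCLike.norm_conj]
    have : ‖-2 * (A : ℂ) * (z - x) ^ 2‖ = 2 * |A| * ‖z - x‖ ^ 2 := by
      rw [norm_mul, norm_mul, norm_pow]
      simp [Complex.norm_real, abs_of_nonneg]
    rw [this]
  refine h2.trans ?_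
  have hrabs : |r| ≤ |Ω2| + |A| * (4 * Complex.normSq y + 4 * Complex.normSq (z - x)) := by
    rw [hr]
    refine (abs_sub _ _).trans ?_
    rw [abs_mul]
    have hS : (0:ℝ) ≤ 4 * Complex.normSq y + 4 * Complex.normSq (z - x) := by
      nlinarith [Complex.normSq_nonneg y, Complex.normSq_nonneg (z - x)]
    rw [_root_.abs_of_nonneg hS]
  nlinarith [norm_nonneg y]

/-- The even subspace `{c₂ = 0}` is invariant under the trimer flow: if a solution
of the trimer equations of motion `i ċ_j = ∂H/∂(conj c_j)` on an interval `I`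
containing `0` satisfies `c₂(0) = 0`, then `c₂(t) = 0` for all `t ∈ I`. -/
theorem trimer_even_subspace_invariant (Ω1 Ω2 Ω3 A : ℝ) (I : Set ℝ) (hI : Convex ℝ I)
    (hI0 : (0 : ℝ) ∈ I) (c1 c2 c3 : ℝ → ℂ)
    (h1 : ∀ t ∈ I, HasDerivAt c1 (-Complex.I * trimerRHS1 Ω1 A (c1 t) (c2 t) (c3 t)) t)
    (h2 : ∀ t ∈ I, HasDerivAt c2 (-Complex.I * trimerRHS2 Ω2 A (c1 t) (c2 t) (c3 t)) t)
    (h3 : ∀ t ∈ I, HasDerivAt c3 (-Complex.I * trimerRHS3 Ω3 A (c1 t) (c2 t) (c3 t)) t)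
    (hc20 : c2 0 = 0) :
    ∀ t ∈ I, c2 t = 0 := by
  have hcont1 : ContinuousOn c1 I := fun s hs => (h1 s hs).continuousAt.continuousWithinAt
  have hcont2 : ContinuousOn c2 I := fun s hs => (h2 s hs).continuousAt.continuousWithinAt
  have hcont3 : ContinuousOn c3 I := fun s hs => (h3 s hs).continuousAt.continuousWithinAt
  set g : ℝ → ℝ := fun s =>
    |Ω2| + |A| * (4 * Complex.normSq (c2 s) + 4 * Complex.normSq (c3 s - c1 s))
      + 2 * |A| * ‖c3 s - c1 s‖ ^ 2 with hg
  have hgI : ContinuousOn g I := by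
    have hd : ContinuousOn (fun s => c3 s - c1 s) I := hcont3.sub hcont1
    have hn2 : ContinuousOn (fun s => Complex.normSq (c2 s)) I :=
      Complex.continuous_normSq.comp_continuousOn hcont2
    have hnd : ContinuousOn (fun s => Complex.normSq (c3 s - c1 s)) I :=
      Complex.continuous_normSq.comp_continuousOn hd
    have hnorm : ContinuousOn (fun s => ‖c3 s - c1 s‖ ^ 2) I := (hd.norm.pow 2)
    exact ((continuousOn_const.add (continuousOn_const.mul
      ((continuousOn_const.mul hn2).add (continuousOn_const.mul hnd)))).add
      (continuousOn_const.mul hnorm))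
  intro t ht
  rcases le_or_gt 0 t with h | h
  · have hIcc : Set.Icc 0 t ⊆ I := hI.ordConnected.out hI0 ht
    exact gronwall_zero' h (fun s hs => h2 s (hIcc hs))
      (fun s hs => trimer_bound' Ω2 A (c1 s) (c2 s) (c3 s)) (hgI.mono hIcc) hc20
  · have hIcc : Set.Icc t 0 ⊆ I := hI.ordConnected.out ht hI0
    have hmem : ∀ s ∈ Set.Icc 0 (-t), -s ∈ Set.Icc t 0 := fun s hs =>
      ⟨by linarith [hs.2], by linarith [hs.1]⟩
    have key := gronwall_zero' (f := fun s => c2 (-s))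
      (f' := fun s => -(-Complex.I * trimerRHS2 Ω2 A (c1 (-s)) (c2 (-s)) (c3 (-s))))
      (g := fun s => g (-s)) (b := -t) (by linarith)
      (fun s hs => by
        have := (h2 (-s) (hIcc (hmem s hs))).scomp s (hasDerivAt_neg s)
        simpa [Function.comp_def] using this)
      (fun s hs => by
        rw [norm_neg]
        exact trimer_bound' Ω2 A (c1 (-s)) (c2 (-s)) (c3 (-s)))
      (((hgI.mono hIcc).comp continuousOn_neg (fun s hs => hmem s hs)))
      (by simpa using hc20)
    simpa using key
end

section
/- For every N > 0, the curve c(t) = (0, √N · e^{−i(Ω2 − 4AN)t}, 0) is an exact solution of the equations of motion of the trimer Hamiltonian (the nonlinear continuation of the dipole mode, a relative fixed point with frequency Ω2 − 4AN). -/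
open Complex ComplexConjugate

/-- For every `N > 0`, the curve `c(t) = (0, √N e^{-i(Ω₂-4AN)t}, 0)` is an exact
solution of the trimer equations of motion `i ċ_j = ∂H/∂(conj c_j)`: the nonlinear
continuation of the dipole mode, a relative fixed point with frequency `Ω₂ - 4AN`. -/
theorem trimer_dipole_mode_solution (Ω1 Ω2 Ω3 A N : ℝ) (hN : 0 < N) :
    ∀ t : ℝ,
      HasDerivAt (fun _ : ℝ => (0 : ℂ))
        (-Complex.I * trimerRHS1 Ω1 A 0
          ((Real.sqrt N : ℂ) * Complex.exp (-Complex.I * ((Ω2 : ℂ) - 4 * A * N) * t)) 0) t ∧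
      HasDerivAt (fun s : ℝ => (Real.sqrt N : ℂ) * Complex.exp (-Complex.I * ((Ω2 : ℂ) - 4 * A * N) * s))
        (-Complex.I * trimerRHS2 Ω2 A 0
          ((Real.sqrt N : ℂ) * Complex.exp (-Complex.I * ((Ω2 : ℂ) - 4 * A * N) * t)) 0) t ∧
      HasDerivAt (fun _ : ℝ => (0 : ℂ))
        (-Complex.I * trimerRHS3 Ω3 A 0
          ((Real.sqrt N : ℂ) * Complex.exp (-Complex.I * ((Ω2 : ℂ) - 4 * A * N) * t)) 0) t := by
  intro t
  set ω : ℂ := -Complex.I * ((Ω2 : ℂ) - 4 * A * N) with hω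
  have hcω : conj ω = -ω := by
    rw [hω]
    simp [map_mul, map_sub, map_neg, Complex.conj_I, Complex.conj_ofReal, map_ofNat]
  have hs : (Real.sqrt N : ℂ) * (Real.sqrt N : ℂ) = (N : ℂ) := by
    rw [← Complex.ofReal_mul, Real.mul_self_sqrt hN.le]
  have hc : conj ((Real.sqrt N : ℂ) * Complex.exp (ω * t)) = (Real.sqrt N : ℂ) * Complex.exp (-(ω * t)) := by
    rw [map_mul, Complex.conj_ofReal, ← Complex.exp_conj, map_mul, hcω, Complex.conj_ofReal, neg_mul]
  have he : Complex.exp (ω * t) * Complex.exp (ω * t) * Complex.exp (-(ω * t)) = Complex.exp (ω * t) := by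
    rw [← Complex.exp_add, ← Complex.exp_add]; ring_nf
  refine ⟨?_, ?_, ?_⟩
  · have : trimerRHS1 Ω1 A 0 ((Real.sqrt N : ℂ) * Complex.exp (ω * t)) 0 = 0 := by
      simp [trimerRHS1]
    rw [this, mul_zero]
    exact hasDerivAt_const t 0
  · have h1 : HasDerivAt (fun s : ℝ => ω * (s : ℂ)) ω t := by
      simpa using (Complex.ofRealCLM.hasDerivAt (x := t)).const_mul ω
    have h2 := (h1.cexp).const_mul ((Real.sqrt N : ℂ))
    have heq : -Complex.I * trimerRHS2 Ω2 A 0 ((Real.sqrt N : ℂ) * Complex.exp (ω * t)) 0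
        = (Real.sqrt N : ℂ) * (Complex.exp (ω * t) * ω) := by
      rw [trimerRHS2]
      rw [hc]
      calc _ = -Complex.I * ((Ω2:ℂ) * ((Real.sqrt N : ℂ) * Complex.exp (ω*t)) - 4 * A * ((Real.sqrt N:ℂ) * (Real.sqrt N:ℂ)) * ((Real.sqrt N:ℂ) * (Complex.exp (ω*t) * Complex.exp (ω*t) * Complex.exp (-(ω*t))))) := by
            ring
        _ = ω * ((Real.sqrt N : ℂ) * Complex.exp (ω * t)) := by rw [hs, he]; ring
        _ = _ := by ring
    rw [heq]
    exact h2
  · have : trimerRHS3 Ω3 A 0 ((Real.sqrt N : ℂ) * Complex.exp (ω * t)) 0 = 0 := by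
      simp [trimerRHS3]
    rw [this, mul_zero]
    exact hasDerivAt_const t 0
end

section
/- Let A > 0, Δ > 0, N > 0 and let (θ, ρ) with |ρ| < N/2 be an equilibrium of the even-subspace system, i.e. both 2Δ + 4ANρ·cosθ/√(N²−4ρ²) + 12Aρ·cos²θ = 0 and −A·(3(N²−4ρ²)·cosθ + N·√(N²−4ρ²))·sinθ = 0 hold. Then sinθ = 0 and ρ satisfies the quartic equation 144A²ρ⁴ + 48AΔρ³ + 4(Δ²−8A²N²)ρ² − 12AΔN²ρ − Δ²N² = 0. -/
/-- If `(θ, ρ)` with `|ρ| < N/2` is an equilibrium of the even-subspace system, then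
`sin θ = 0` and `ρ` satisfies the quartic
`144A²ρ⁴ + 48AΔρ³ + 4(Δ²−8A²N²)ρ² − 12AΔN²ρ − Δ²N² = 0`. -/
theorem even_subspace_equilibria (A Δ N θ ρ : ℝ)
    (hA : 0 < A) (hΔ : 0 < Δ) (hN : 0 < N) (hρ : |ρ| < N / 2)
    (hθdot : 2 * Δ + 4 * A * N * ρ * Real.cos θ / Real.sqrt (N ^ 2 - 4 * ρ ^ 2)
        + 12 * A * ρ * Real.cos θ ^ 2 = 0)
    (hρdot : -(A * (3 * (N ^ 2 - 4 * ρ ^ 2) * Real.cos θ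
        + N * Real.sqrt (N ^ 2 - 4 * ρ ^ 2)) * Real.sin θ) = 0) :
    Real.sin θ = 0 ∧
      144 * A ^ 2 * ρ ^ 4 + 48 * A * Δ * ρ ^ 3 + 4 * (Δ ^ 2 - 8 * A ^ 2 * N ^ 2) * ρ ^ 2
        - 12 * A * Δ * N ^ 2 * ρ - Δ ^ 2 * N ^ 2 = 0 := by
  set s := Real.sqrt (N ^ 2 - 4 * ρ ^ 2) with hs
  have hpos : 0 < N ^ 2 - 4 * ρ ^ 2 := by
    have h1 : ρ ^ 2 < (N / 2) ^ 2 := by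
      have := sq_abs ρ
      nlinarith [abs_nonneg ρ, hρ, hN]
    nlinarith
  have hspos : 0 < s := Real.sqrt_pos.mpr hpos
  have hssq : s ^ 2 = N ^ 2 - 4 * ρ ^ 2 := Real.sq_sqrt hpos.le
  have hsin : Real.sin θ = 0 := by
    by_contra hsin
    have hfac : 3 * (N ^ 2 - 4 * ρ ^ 2) * Real.cos θ + N * s = 0 := by
      rcases mul_eq_zero.mp (neg_eq_zero.mp hρdot) with h | h
      · rcases mul_eq_zero.mp h with h' | h'
        · exact absurd h' hA.ne'
        · exact h'
      · exact absurd h hsin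
    -- cos θ = -N/(3s)
    have hcos : Real.cos θ = -N / (3 * s) := by
      have h3 : (3 : ℝ) * (N ^ 2 - 4 * ρ ^ 2) ≠ 0 := by positivity
      field_simp
      nlinarith [hfac, hssq, hspos]
    rw [hcos] at hθdot
    have h3s : (3 : ℝ) * s ≠ 0 := by positivity
    have hs0 : s ≠ 0 := hspos.ne'
    field_simp at hθdot
    have hss : s * s = N ^ 2 - 4 * ρ ^ 2 := by rw [← pow_two]; exact hssq
    nlinarith [hθdot, hss, hΔ, mul_pos hspos hspos, mul_pos (mul_pos hspos hspos) (mul_pos hspos hspos)]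
  refine ⟨hsin, ?_⟩
  have hcossq : Real.cos θ ^ 2 = 1 := by
    have := Real.sin_sq_add_cos_sq θ
    rw [hsin] at this; nlinarith
  have hs0 : s ≠ 0 := hspos.ne'
  have hkey : 4 * A * N * ρ * Real.cos θ = -(2 * Δ + 12 * A * ρ) * s := by
    have := hθdot
    rw [hcossq] at this
    field_simp at this
    linarith [this]
  have hsq : (4 * A * N * ρ * Real.cos θ) ^ 2 = ((2 * Δ + 12 * A * ρ) * s) ^ 2 := by
    rw [hkey]; ring
  linear_combination (1/4 : ℝ) * hsq + (1/4 : ℝ) * (2*Δ+12*A*ρ)^2 * hssq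
    - 4*A^2*N^2*ρ^2 * hcossq
end

section
/- Fix Δ > 0 and define D(n, ε) = n⁴ + 4εn³ + (4ε²−Δ²)n² + Δ²ε². Then there exist ε0 > 0 and C > 0 such that for every ε ∈ (0, ε0) there exists n > 0 with D(n, ε) = 0 and |n − ε| ≤ C·ε². (The first Hamiltonian Hopf bifurcation threshold satisfies n = ε + O(ε²).) -/
/-- The first Hamiltonian Hopf bifurcation threshold: for fixed `Δ > 0` there
exist `ε₀ > 0` and `C > 0` such that for every `ε ∈ (0, ε₀)` the bifurcation
discriminant `D(n,ε) = n⁴ + 4εn³ + (4ε²−Δ²)n² + Δ²ε²` has a positive root `n`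
with `n = ε + O(ε²)`, i.e. `|n − ε| ≤ Cε²`. -/
theorem HH1_threshold_asymptotics (Δ : ℝ) (hΔ : 0 < Δ) :
    ∃ ε0 > (0 : ℝ), ∃ C > (0 : ℝ), ∀ ε : ℝ, ε ∈ Set.Ioo 0 ε0 →
      ∃ n > (0 : ℝ),
        n ^ 4 + 4 * ε * n ^ 3 + (4 * ε ^ 2 - Δ ^ 2) * n ^ 2 + Δ ^ 2 * ε ^ 2 = 0 ∧
        |n - ε| ≤ C * ε ^ 2 := by
  refine ⟨min 1 (Δ ^ 2 / 65), lt_min one_pos (by positivity), 1, one_pos, ?_⟩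
  rintro ε ⟨hε0, hεu⟩
  have hε1 : ε ≤ 1 := le_of_lt (lt_of_lt_of_le hεu (min_le_left _ _))
  have hεΔ : ε < Δ ^ 2 / 65 := lt_of_lt_of_le hεu (min_le_right _ _)
  set f : ℝ → ℝ := fun n =>
    n ^ 4 + 4 * ε * n ^ 3 + (4 * ε ^ 2 - Δ ^ 2) * n ^ 2 + Δ ^ 2 * ε ^ 2 with hf
  have hcont : ContinuousOn f (Set.Icc ε (ε + ε ^ 2)) := by
    apply Continuous.continuousOn; continuity
  have hab : ε ≤ ε + ε ^ 2 := by nlinarith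
  have hfa : 0 ≤ f ε := by
    simp only [hf]; nlinarith
  have hfb : f (ε + ε ^ 2) ≤ 0 := by
    simp only [hf]
    have key : (ε + ε ^ 2) ^ 4 + 4 * ε * (ε + ε ^ 2) ^ 3 +
        (4 * ε ^ 2 - Δ ^ 2) * (ε + ε ^ 2) ^ 2 + Δ ^ 2 * ε ^ 2 =
        Δ ^ 2 * (ε ^ 2 - (ε + ε ^ 2) ^ 2) +
        (ε + ε ^ 2) ^ 2 * ((ε + ε ^ 2) + 2 * ε) ^ 2 := by ring
    rw [key]
    have h1 : Δ ^ 2 * (ε ^ 2 - (ε + ε ^ 2) ^ 2) = -Δ ^ 2 * (2 * ε ^ 3 + ε ^ 4) := by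
      ring
    have h2 : (ε + ε ^ 2) ^ 2 * ((ε + ε ^ 2) + 2 * ε) ^ 2 =
        ε ^ 4 * ((1 + ε) ^ 2 * (3 + ε) ^ 2) := by ring
    have h3 : (1 + ε) ^ 2 * (3 + ε) ^ 2 ≤ 64 := by
      have ha : (1 + ε) * (3 + ε) ≤ 8 := by nlinarith
      have hb : 0 ≤ (1 + ε) * (3 + ε) := by positivity
      calc (1 + ε) ^ 2 * (3 + ε) ^ 2 = ((1 + ε) * (3 + ε)) ^ 2 := by ring
        _ ≤ 8 ^ 2 := by nlinarith
        _ = 64 := by norm_num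
    nlinarith [sq_nonneg ε, pow_pos hε0 3, pow_pos hε0 4]
  have := intermediate_value_Icc' hab hcont
  have h0 : (0 : ℝ) ∈ Set.Icc (f (ε + ε ^ 2)) (f ε) := ⟨hfb, hfa⟩
  obtain ⟨n, hn, hfn⟩ := this h0
  refine ⟨n, lt_of_lt_of_le hε0 hn.1, hfn, ?_⟩
  rw [abs_le]
  constructor
  · nlinarith [hn.1, sq_nonneg ε]
  · nlinarith [hn.2]
end

section
/- Let Δ ∈ ℝ and ε > 0 be real. Define the 4×4 real matrices 𝒜 = [[0,0,ε−Δ,−ε],[0,0,−ε,Δ+ε],[Δ−ε,−ε,0,0],[−ε,−Δ−ε,0,0]], P = [[1/(2√ε),0,0,√ε],[1/(2√ε),0,0,−√ε],[0,−1/(2√ε),√ε,0],[0,1/(2√ε),√ε,0]], J = [[0,0,1,0],[0,0,0,1],[−1,0,0,0],[0,−1,0,0]], 𝒮 = [[0,1,0,0],[−1,0,0,0],[0,0,0,1],[0,0,−1,0]], and 𝒥 = [[1,0,0,0],[0,1,0,0]] placed in the lower-left block, i.e. 𝒥 = [[0,0,0,0],[0,0,0,0],[1,0,0,0],[0,1,0,0]].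 Then P is symplectic, Pᵀ·J·P = J, and P conjugates 𝒜 into the non-semisimple −1:1 resonance normal form: 𝒜·P = P·(Δ·𝒮 − 𝒥). -/
set_option maxHeartbeats 1000000 in
private lemma bc_aux (Δ s : ℝ) (hs0 : s ≠ 0) :
    (!![1 / (2 * s), 0, 0, s;
        1 / (2 * s), 0, 0, -s;
        0, -(1 / (2 * s)), s, 0;
        0, 1 / (2 * s), s, 0] : Matrix (Fin 4) (Fin 4) ℝ).transpose
      * (!![0, 0, 1, 0; 0, 0, 0, 1; -1, 0, 0, 0; 0, -1, 0, 0] : Matrix (Fin 4) (Fin 4) ℝ)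
      * !![1 / (2 * s), 0, 0, s;
           1 / (2 * s), 0, 0, -s;
           0, -(1 / (2 * s)), s, 0;
           0, 1 / (2 * s), s, 0]
      = !![0, 0, 1, 0; 0, 0, 0, 1; -1, 0, 0, 0; 0, -1, 0, 0] ∧
    (!![0, 0, s * s - Δ, -(s * s);
        0, 0, -(s * s), Δ + s * s;
        Δ - s * s, -(s * s), 0, 0;
        -(s * s), -Δ - s * s, 0, 0] : Matrix (Fin 4) (Fin 4) ℝ)
      * !![1 / (2 * s), 0, 0, s;
           1 / (2 * s), 0, 0, -s;
           0, -(1 / (2 * s)), s, 0;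
           0, 1 / (2 * s), s, 0]
      = !![1 / (2 * s), 0, 0, s;
           1 / (2 * s), 0, 0, -s;
           0, -(1 / (2 * s)), s, 0;
           0, 1 / (2 * s), s, 0]
        * (Δ • (!![0, 1, 0, 0; -1, 0, 0, 0; 0, 0, 0, 1; 0, 0, -1, 0] : Matrix (Fin 4) (Fin 4) ℝ)
            - !![0, 0, 0, 0; 0, 0, 0, 0; 1, 0, 0, 0; 0, 1, 0, 0]) := by
  have hT : (!![1 / (2 * s), 0, 0, s;
        1 / (2 * s), 0, 0, -s;
        0, -(1 / (2 * s)), s, 0;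
        0, 1 / (2 * s), s, 0] : Matrix (Fin 4) (Fin 4) ℝ).transpose
      = !![1 / (2 * s), 1 / (2 * s), 0, 0;
           0, 0, -(1 / (2 * s)), 1 / (2 * s);
           0, 0, s, s;
           s, -s, 0, 0] := by
    ext i j; fin_cases i <;> fin_cases j <;> rfl
  rw [hT]
  constructor <;>
  · ext i j
    fin_cases i <;> fin_cases j <;>
      simp [Matrix.mul_apply, Fin.sum_univ_four, Matrix.vecHead, Matrix.vecTail] <;> (try field_simp) <;> (try ring)

/-- The Burgoyne–Cushman change of basis at the first Hamiltonian Hopf bifurcation: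
`P` is symplectic (`Pᵀ J P = J`) and conjugates the linearization matrix `𝒜` into
the non-semisimple −1:1 resonance normal form: `𝒜 P = P (Δ𝒮 − 𝒥)`. -/
theorem burgoyne_cushman_normal_form (Δ ε : ℝ) (hε : 0 < ε) :
    (!![1 / (2 * Real.sqrt ε), 0, 0, Real.sqrt ε;
        1 / (2 * Real.sqrt ε), 0, 0, -Real.sqrt ε;
        0, -(1 / (2 * Real.sqrt ε)), Real.sqrt ε, 0;
        0, 1 / (2 * Real.sqrt ε), Real.sqrt ε, 0] : Matrix (Fin 4) (Fin 4) ℝ).transpose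
      * (!![0, 0, 1, 0; 0, 0, 0, 1; -1, 0, 0, 0; 0, -1, 0, 0] : Matrix (Fin 4) (Fin 4) ℝ)
      * !![1 / (2 * Real.sqrt ε), 0, 0, Real.sqrt ε;
           1 / (2 * Real.sqrt ε), 0, 0, -Real.sqrt ε;
           0, -(1 / (2 * Real.sqrt ε)), Real.sqrt ε, 0;
           0, 1 / (2 * Real.sqrt ε), Real.sqrt ε, 0]
      = !![0, 0, 1, 0; 0, 0, 0, 1; -1, 0, 0, 0; 0, -1, 0, 0] ∧
    (!![0, 0, ε - Δ, -ε;
        0, 0, -ε, Δ + ε;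
        Δ - ε, -ε, 0, 0;
        -ε, -Δ - ε, 0, 0] : Matrix (Fin 4) (Fin 4) ℝ)
      * !![1 / (2 * Real.sqrt ε), 0, 0, Real.sqrt ε;
           1 / (2 * Real.sqrt ε), 0, 0, -Real.sqrt ε;
           0, -(1 / (2 * Real.sqrt ε)), Real.sqrt ε, 0;
           0, 1 / (2 * Real.sqrt ε), Real.sqrt ε, 0]
      = !![1 / (2 * Real.sqrt ε), 0, 0, Real.sqrt ε;
           1 / (2 * Real.sqrt ε), 0, 0, -Real.sqrt ε;
           0, -(1 / (2 * Real.sqrt ε)), Real.sqrt ε, 0;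
           0, 1 / (2 * Real.sqrt ε), Real.sqrt ε, 0]
        * (Δ • (!![0, 1, 0, 0; -1, 0, 0, 0; 0, 0, 0, 1; 0, 0, -1, 0] : Matrix (Fin 4) (Fin 4) ℝ)
            - !![0, 0, 0, 0; 0, 0, 0, 0; 1, 0, 0, 0; 0, 1, 0, 0]) := by
  have hs0 : Real.sqrt ε ≠ 0 := ne_of_gt (Real.sqrt_pos.mpr hε)
  have hs : Real.sqrt ε * Real.sqrt ε = ε := Real.mul_self_sqrt hε.le
  have h := bc_aux Δ (Real.sqrt ε) hs0
  rw [hs] at h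
  convert h using 4 <;> ring
end

section
/- Let Δ ≠ 0 and ε ≠ 0 be real and let 𝒜 = [[0,0,ε−Δ,−ε],[0,0,−ε,Δ+ε],[Δ−ε,−ε,0,0],[−ε,−Δ−ε,0,0]]. Then (𝒜² + Δ²·I)² = 0 while 𝒜² + Δ²·I ≠ 0; consequently the characteristic polynomial of 𝒜 is (X² + Δ²)², its eigenvalues are ±iΔ each with algebraic multiplicity two, and 𝒜 is not diagonalizable over ℂ (the eigenvalues ±iΔ are non-semisimple). -/
open Polynomial

/-- The matrix `𝒜` of the linearized truncated normal form about the dipole mode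
at the first Hamiltonian Hopf bifurcation. -/
def HHmatrix (Δ ε : ℝ) : Matrix (Fin 4) (Fin 4) ℝ :=
  !![0, 0, ε - Δ, -ε;
     0, 0, -ε, Δ + ε;
     Δ - ε, -ε, 0, 0;
     -ε, -Δ - ε, 0, 0]

set_option maxHeartbeats 2000000 in
/-- For `Δ ≠ 0`, `ε ≠ 0`: `(𝒜² + Δ²I)² = 0` while `𝒜² + Δ²I ≠ 0`; consequently
the characteristic polynomial of `𝒜` is `(X² + Δ²)²`, its eigenvalues `±iΔ` each
have algebraic multiplicity two, and `𝒜` is not diagonalizable over ℂ. -/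
theorem HHmatrix_nonsemisimple (Δ ε : ℝ) (hΔ : Δ ≠ 0) (hε : ε ≠ 0) :
    ((HHmatrix Δ ε) ^ 2 + (Δ ^ 2) • (1 : Matrix (Fin 4) (Fin 4) ℝ)) ^ 2 = 0 ∧
    (HHmatrix Δ ε) ^ 2 + (Δ ^ 2) • (1 : Matrix (Fin 4) (Fin 4) ℝ) ≠ 0 ∧
    (HHmatrix Δ ε).charpoly = (X ^ 2 + C (Δ ^ 2)) ^ 2 ∧
    Polynomial.rootMultiplicity (Complex.I * (Δ : ℂ))
      ((HHmatrix Δ ε).charpoly.map (algebraMap ℝ ℂ)) = 2 ∧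
    Polynomial.rootMultiplicity (-(Complex.I * (Δ : ℂ)))
      ((HHmatrix Δ ε).charpoly.map (algebraMap ℝ ℂ)) = 2 ∧
    ¬ ∃ P : Matrix (Fin 4) (Fin 4) ℂ, IsUnit P.det ∧
        (P⁻¹ * (HHmatrix Δ ε).map (algebraMap ℝ ℂ) * P).IsDiag := by
  have hΔc : (Δ:ℂ) ≠ 0 := Complex.ofReal_ne_zero.mpr hΔ
  have hεc : (ε:ℂ) ≠ 0 := Complex.ofReal_ne_zero.mpr hε
  -- Part 1: (𝒜² + Δ²I)² = 0 over ℝ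
  have part1 : ((HHmatrix Δ ε) ^ 2 + (Δ ^ 2) • (1 : Matrix (Fin 4) (Fin 4) ℝ)) ^ 2 = 0 := by
    refine Matrix.ext fun i j => ?_
    fin_cases i <;> fin_cases j <;>
      simp [HHmatrix, pow_succ, Matrix.mul_apply, Fin.sum_univ_four, Matrix.one_apply,
        Matrix.vecHead, Matrix.vecTail] <;> ring
  -- Part 2: 𝒜² + Δ²I ≠ 0 over ℝ
  have part2 : (HHmatrix Δ ε) ^ 2 + (Δ ^ 2) • (1 : Matrix (Fin 4) (Fin 4) ℝ) ≠ 0 := by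
    intro h
    have h0 := congrFun (congrFun h 0) 0
    simp [HHmatrix, pow_succ, Matrix.mul_apply, Fin.sum_univ_four, Matrix.one_apply,
      Matrix.vecHead, Matrix.vecTail] at h0
    have h2 : 2 * Δ * ε = 0 := by linear_combination h0
    have : 2 * Δ * ε ≠ 0 := by positivity
    exact this h2
  -- Part 3: the characteristic polynomial
  have part3 : (HHmatrix Δ ε).charpoly = (X ^ 2 + C (Δ ^ 2)) ^ 2 := by
    have h : (HHmatrix Δ ε).charmatrix =
        !![X, 0, -C (ε - Δ), C ε;
           0, X, C ε, -C (Δ + ε);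
           -C (Δ - ε), C ε, X, 0;
           C ε, C (Δ + ε), 0, X] := by
      refine Matrix.ext fun i j => ?_
      fin_cases i <;> fin_cases j <;>
        simp [Matrix.charmatrix_apply, HHmatrix, Matrix.diagonal, Matrix.vecHead,
          Matrix.vecTail] <;> ring
    rw [Matrix.charpoly, h]
    simp [Matrix.det_succ_row_zero, Fin.sum_univ_succ, map_sub, map_add,
      Fin.succAbove, Fin.castSucc, Matrix.cons_val', Matrix.cons_val_zero,
      Matrix.cons_val_one, Matrix.head_cons, Matrix.head_fin_const, Fin.castAdd,
      Fin.castLE, Matrix.vecHead, Matrix.vecTail]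
    ring
  -- Factorization of the complexified characteristic polynomial
  have hfac : (HHmatrix Δ ε).charpoly.map (algebraMap ℝ ℂ)
      = (X - C (Complex.I * Δ)) ^ 2 * (X - C (-(Complex.I * Δ))) ^ 2 := by
    rw [part3]
    have h1 : (C (Complex.I * (Δ:ℂ)) : ℂ[X]) ^ 2 = -(C ((Δ:ℂ) ^ 2)) := by
      rw [← map_pow, ← map_neg]
      congr 1
      rw [mul_pow, Complex.I_sq]; ring
    rw [Polynomial.map_pow, Polynomial.map_add, Polynomial.map_pow, map_X, map_C]
    have h2 : algebraMap ℝ ℂ (Δ ^ 2) = ((Δ:ℂ))^2 := by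
      push_cast [Complex.coe_algebraMap]; ring
    rw [h2]
    have key : (X:ℂ[X])^2 + C ((Δ:ℂ)^2)
        = (X - C (Complex.I * Δ)) * (X - C (-(Complex.I * Δ))) := by
      rw [map_neg, sub_neg_eq_add]
      linear_combination h1
    rw [key]; ring
  have hne : ((X:ℂ[X]) - C (Complex.I * (Δ:ℂ))) ^ 2 * (X - C (-(Complex.I * (Δ:ℂ)))) ^ 2 ≠ 0 :=
    mul_ne_zero (pow_ne_zero _ (X_sub_C_ne_zero _)) (pow_ne_zero _ (X_sub_C_ne_zero _))
  -- Part 4: root multiplicity of iΔ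
  have part4 : Polynomial.rootMultiplicity (Complex.I * (Δ : ℂ))
      ((HHmatrix Δ ε).charpoly.map (algebraMap ℝ ℂ)) = 2 := by
    have hroot : ¬ IsRoot ((X - C (-(Complex.I * (Δ:ℂ)))) ^ 2) (Complex.I * (Δ:ℂ)) := by
      simpa [IsRoot, sub_neg_eq_add, Complex.ext_iff] using hΔ
    rw [hfac, Polynomial.rootMultiplicity_mul hne,
      Polynomial.rootMultiplicity_X_sub_C_pow,
      Polynomial.rootMultiplicity_eq_zero hroot]
  -- Part 5: root multiplicity of -iΔ
  have part5 : Polynomial.rootMultiplicity (-(Complex.I * (Δ : ℂ)))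
      ((HHmatrix Δ ε).charpoly.map (algebraMap ℝ ℂ)) = 2 := by
    have hroot : ¬ IsRoot ((X - C (Complex.I * (Δ:ℂ))) ^ 2) (-(Complex.I * (Δ:ℂ))) := by
      simp only [IsRoot, eval_pow, eval_sub, eval_X, eval_C]
      intro h
      have h' : -(Complex.I * (Δ:ℂ)) - Complex.I * (Δ:ℂ) = 0 :=
        pow_eq_zero_iff (n := 2) (by norm_num) |>.mp h
      have h'' : Complex.I * (Δ:ℂ) = 0 := by linear_combination -h'/2
      rcases mul_eq_zero.mp h'' with h3 | h3
      · exact Complex.I_ne_zero h3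
      · exact hΔc h3
    have hne' : ((X:ℂ[X]) - C (-(Complex.I * (Δ:ℂ)))) ^ 2
        * (X - C (Complex.I * (Δ:ℂ))) ^ 2 ≠ 0 :=
      mul_ne_zero (pow_ne_zero _ (X_sub_C_ne_zero _)) (pow_ne_zero _ (X_sub_C_ne_zero _))
    rw [hfac, mul_comm ((X - C (Complex.I * (Δ:ℂ))) ^ 2)
        ((X - C (-(Complex.I * (Δ:ℂ)))) ^ 2),
      Polynomial.rootMultiplicity_mul hne',
      Polynomial.rootMultiplicity_X_sub_C_pow,
      Polynomial.rootMultiplicity_eq_zero hroot]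
  -- Part 6: not diagonalizable over ℂ
  have part6 : ¬ ∃ P : Matrix (Fin 4) (Fin 4) ℂ, IsUnit P.det ∧
      (P⁻¹ * (HHmatrix Δ ε).map (algebraMap ℝ ℂ) * P).IsDiag := by
    rintro ⟨P, hP, hD⟩
    set A : Matrix (Fin 4) (Fin 4) ℂ := (HHmatrix Δ ε).map (algebraMap ℝ ℂ) with hAdef
    set B : Matrix (Fin 4) (Fin 4) ℂ :=
      A ^ 2 + ((Δ:ℂ) ^ 2) • (1 : Matrix (Fin 4) (Fin 4) ℂ) with hB
    -- B² = 0 over ℂ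
    have hB2 : B ^ 2 = 0 := by
      rw [hB, hAdef]
      refine Matrix.ext fun i j => ?_
      fin_cases i <;> fin_cases j <;>
        simp [HHmatrix, pow_succ, Matrix.mul_apply, Fin.sum_univ_four, Matrix.one_apply,
          Matrix.vecHead, Matrix.vecTail, Matrix.map_apply] <;> ring
    -- B ≠ 0 over ℂ
    have hBne : B ≠ 0 := by
      intro h
      have h0 := congrFun (congrFun h 0) 0
      rw [hB, hAdef] at h0
      simp [HHmatrix, pow_succ, Matrix.mul_apply, Fin.sum_univ_four, Matrix.one_apply,
        Matrix.vecHead, Matrix.vecTail, Matrix.map_apply] at h0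
      have h2 : 2 * (Δ:ℂ) * (ε:ℂ) = 0 := by linear_combination h0
      have : (2:ℂ) * Δ * ε ≠ 0 := mul_ne_zero (mul_ne_zero two_ne_zero hΔc) hεc
      exact this h2
    have h1 : P * P⁻¹ = 1 := Matrix.mul_nonsing_inv P hP
    have h2 : P⁻¹ * P = 1 := Matrix.nonsing_inv_mul P hP
    set D := P⁻¹ * A * P with hDdef
    set E := P⁻¹ * B * P with hEdef
    have hEdiag : E.IsDiag := by
      have hEeq : E = D * D + ((Δ:ℂ) ^ 2) • (1 : Matrix (Fin 4) (Fin 4) ℂ) := by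
        rw [hEdef, hDdef, hB]
        have hsq : P⁻¹ * A * P * (P⁻¹ * A * P) = P⁻¹ * A ^ 2 * P := by
          rw [pow_two]
          calc P⁻¹ * A * P * (P⁻¹ * A * P) = P⁻¹ * A * (P * P⁻¹) * A * P := by
                noncomm_ring
            _ = P⁻¹ * (A * A) * P := by rw [h1]; noncomm_ring
        rw [hsq]
        rw [Matrix.mul_add, Matrix.add_mul]
        congr 1
        rw [Matrix.mul_smul, Matrix.smul_mul, Matrix.mul_one, h2]
      rw [hEeq]
      intro i j hij
      have hd := hD
      simp only [Matrix.IsDiag] at hd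
      have t1 : (D * D) i j = 0 := by
        rw [Matrix.mul_apply]
        apply Finset.sum_eq_zero
        intro k _
        by_cases hk : k = i
        · subst hk; rw [hd hij]; ring
        · rw [hd (Ne.symm hk)]; ring
      simp [t1, Matrix.one_apply, hij]
    have hE2 : E * E = 0 := by
      rw [hEdef]
      calc P⁻¹ * B * P * (P⁻¹ * B * P) = P⁻¹ * B * (P * P⁻¹) * B * P := by noncomm_ring
        _ = P⁻¹ * (B * B) * P := by rw [h1]; noncomm_ring
        _ = 0 := by rw [← pow_two, hB2]; simp
    have hE0 : E = 0 := by
      refine Matrix.ext fun i j => ?_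
      by_cases hij : i = j
      · subst hij
        have hii := congrFun (congrFun hE2 i) i
        rw [Matrix.mul_apply] at hii
        have hsum : ∑ k, E i k * E k i = E i i * E i i := by
          rw [Finset.sum_eq_single i]
          · intro k _ hk; rw [hEdiag (Ne.symm hk)]; ring
          · intro h; exact absurd (Finset.mem_univ i) h
        rw [hsum] at hii
        simpa using pow_eq_zero_iff (n := 2) (by norm_num) |>.mp
          (by rw [pow_two]; simpa using hii)
      · exact hEdiag hij
    apply hBne
    have hBPE : B = P * E * P⁻¹ := by
      rw [hEdef]
      calc B = (P * P⁻¹) * B * (P * P⁻¹) := by rw [h1]; noncomm_ring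
        _ = P * (P⁻¹ * B * P) * P⁻¹ := by noncomm_ring
    rw [hBPE, hE0]
    simp
  exact ⟨part1, part2, part3, part4, part5, part6⟩
end
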